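/- Assume w > 4. Then for every integer i ≥ 0: c(i) = 1 + p − p^i(p²−1)/(p^{i+1}−1) and d(i) = ((p−1)/(p^{i+1}−1))·(pw)^{i/2}, where (pw)^{i/2} denotes the real power (pw)^{i/2} of the positive real pw. -/

import Mathlib

/-- The sequence `b` with `b 0 = 0` and `b i = (1 + b (i-1)) / (w - 1 - b (i-1))`. -/
noncomputable def bseq (w : ℝ) : ℕ → ℝ
  | 0 => 0
  | i + 1 => (1 + bseq w i) / (w - 1 - bseq w i)

/-- The sequence `a` with `a 0 = 1` and `a i = a (i-1) / (w - 1 - b (i-1))`. -/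
noncomputable def aseq (w : ℝ) : ℕ → ℝ
  | 0 => 1
  | i + 1 => aseq w i / (w - 1 - bseq w i)

/-- The sequence `d` with `d 0 = 1` and `d i = d (i-1) * (1 + b (i-1))`. -/
noncomputable def dseq (w : ℝ) : ℕ → ℝ
  | 0 => 1
  | i + 1 => dseq w i * (1 + bseq w i)

/-- The sequence `c` with `c 0 = 0` and `c i = c (i-1) + d (i-1) * a (i-1)`. -/
noncomputable def cseq (w : ℝ) : ℕ → ℝ
  | 0 => 0
  | i + 1 => cseq w i + dseq w i * aseq w i

/-- closed forms for `c` and `d` when `w > 4`. -/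
theorem cseq_dseq_closed_form (w : ℝ) (hw : 4 < w) (p : ℝ)
    (hp : p = (w - 2 - Real.sqrt (w ^ 2 - 4 * w)) / 2) :
    ∀ i : ℕ,
      cseq w i = 1 + p - p ^ i * (p ^ 2 - 1) / (p ^ (i + 1) - 1) ∧
      dseq w i = (p - 1) / (p ^ (i + 1) - 1) * (p * w) ^ ((i : ℝ) / 2) := by
  have hs0 : (0:ℝ) ≤ Real.sqrt (w ^ 2 - 4 * w) := Real.sqrt_nonneg _
  have hs2 : Real.sqrt (w ^ 2 - 4 * w) ^ 2 = w ^ 2 - 4 * w := by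
    rw [Real.sq_sqrt]; nlinarith
  set s := Real.sqrt (w ^ 2 - 4 * w) with hs
  have hp0 : 0 < p := by rw [hp]; nlinarith
  have hp1 : p < 1 := by rw [hp]; nlinarith
  have hkey : p ^ 2 - (w - 2) * p + 1 = 0 := by
    rw [hp]; linear_combination hs2 / 4
  have hpw : p * w = (p + 1) ^ 2 := by linarith [hkey]
  have hpne : p ≠ 0 := ne_of_gt hp0
  have hp1ne : p + 1 ≠ 0 := by positivity
  have hne : ∀ n : ℕ, n ≠ 0 → p ^ n - 1 ≠ 0 := by
    intro n hn
    have : p ^ n < 1 := pow_lt_one₀ hp0.le hp1 hn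
    linarith
  have hrpow : ∀ i : ℕ, (p * w) ^ ((i : ℝ) / 2) = (p + 1) ^ i := by
    intro i
    rw [hpw, ← Real.rpow_natCast (p + 1) 2, ← Real.rpow_mul (by positivity)]
    have h2 : ((2 : ℕ) : ℝ) * ((i : ℝ) / 2) = (i : ℝ) := by push_cast; ring
    rw [h2, Real.rpow_natCast]
  have main : ∀ i : ℕ,
      bseq w i = p * (p ^ i - 1) / (p ^ (i + 2) - 1) ∧
      aseq w i = (p / (p + 1)) ^ i * (p ^ 2 - 1) / (p ^ (i + 2) - 1) ∧
      dseq w i = (p - 1) / (p ^ (i + 1) - 1) * (p + 1) ^ i ∧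
      cseq w i = 1 + p - p ^ i * (p ^ 2 - 1) / (p ^ (i + 1) - 1) := by
    intro i
    induction i with
    | zero =>
      have h1 := hne 1 (by norm_num)
      have h2 := hne 2 (by norm_num)
      have h1' : p - 1 ≠ 0 := by rwa [pow_one] at h1
      refine ⟨by simp [bseq], ?_, ?_, ?_⟩
      · show (1:ℝ) = _
        rw [pow_zero, one_mul, zero_add, div_self h2]
      · show (1:ℝ) = _
        rw [pow_zero, mul_one, zero_add, pow_one, div_self h1']
      · show (0:ℝ) = _
        rw [pow_zero, one_mul, zero_add, pow_one]
        field_simp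
        ring
    | succ n ih =>
      obtain ⟨hb, ha, hd, hc⟩ := ih
      have h1 := hne (n + 1) (by omega)
      have h2 := hne (n + 2) (by omega)
      have h3 := hne (n + 3) (by omega)
      have hweq : w = (p + 1) ^ 2 / p := by field_simp; linarith [hpw]
      have hden : w - 1 - bseq w n
          = (p + 1) * (p ^ (n + 3) - 1) / (p * (p ^ (n + 2) - 1)) := by
        rw [hb, hweq]; field_simp; ring
      have hbn : bseq w (n + 1) = p * (p ^ (n + 1) - 1) / (p ^ (n + 1 + 2) - 1) := by
        show (1 + bseq w n) / (w - 1 - bseq w n) = _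
        rw [hden, hb]
        field_simp
        ring
      have han : aseq w (n + 1)
          = (p / (p + 1)) ^ (n + 1) * (p ^ 2 - 1) / (p ^ (n + 1 + 2) - 1) := by
        show aseq w n / (w - 1 - bseq w n) = _
        rw [hden, ha]
        simp only [div_pow]
        field_simp
        ring
      have hdn : dseq w (n + 1) = (p - 1) / (p ^ (n + 1 + 1) - 1) * (p + 1) ^ (n + 1) := by
        show dseq w n * (1 + bseq w n) = _
        rw [hd, hb]
        field_simp
        ring
      have hcn : cseq w (n + 1)
          = 1 + p - p ^ (n + 1) * (p ^ 2 - 1) / (p ^ (n + 1 + 1) - 1) := by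
        show cseq w n + dseq w n * aseq w n = _
        rw [hc, hd, ha]
        simp only [div_pow]
        field_simp
        ring
      exact ⟨hbn, han, hdn, hcn⟩
  intro i
  obtain ⟨_, _, hd, hc⟩ := main i
  exact ⟨hc, by rw [hd, hrpow]⟩
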